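/- Let p ≥ 3 be an integer and let G = (V,E) be an infinite tree (a connected acyclic simple graph) in which every vertex has degree exactly p, equipped with the equilateral edge lengths ℓ(e) = 1 for all e ∈ E. Then α(G) = (p−2)/(p−1). -/

import Mathlib

open scoped BigOperators

noncomputable section

variable {V : Type*}

/-- Total length of a set of edges. -/
def mes (ℓ : Sym2 V → ℝ) (E : Set (Sym2 V)) : ℝ := ∑ᶠ e ∈ E, ℓ e

/-- Weight `m(v)` of a vertex: total length of the edges incident to `v`. -/
def mval (G : SimpleGraph V) (ℓ : Sym2 V → ℝ) (v : V) : ℝ := ∑ᶠ e ∈ G.incidenceSet v, ℓ e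

/-- Characteristic value of an edge (tree case: no tile terms). -/
def cVal (G : SimpleGraph V) (ℓ : Sym2 V → ℝ) (e : Sym2 V) : ℝ :=
  1 / ℓ e - ∑ᶠ w ∈ {w : V | w ∈ e}, 1 / mval G ℓ w

/-- Boundary vertices of a subgraph. -/
def bdry (G : SimpleGraph V) (H : G.Subgraph) : Set V :=
  {v ∈ H.verts | (H.neighborSet v).ncard < (G.neighborSet v).ncard}

/-- Total (subgraph-)degree of the boundary of a subgraph. -/
def degBdry (G : SimpleGraph V) (H : G.Subgraph) : ℝ :=
  ∑ᶠ v ∈ bdry G H, ((H.neighborSet v).ncard : ℝ)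

/-- Isoperimetric constant of a metric graph. -/
def alpha (G : SimpleGraph V) (ℓ : Sym2 V → ℝ) : ℝ :=
  sInf {x | ∃ H : G.Subgraph, H.verts.Finite ∧ H.Connected ∧ H.edgeSet.Nonempty ∧
    x = degBdry G H / mes ℓ H.edgeSet}

/-- The star-like subgraph generated by a vertex set `U`: its edges are all the
edges of `G` incident to some vertex of `U`. -/
def starSubgraph (G : SimpleGraph V) (U : Set V) : G.Subgraph where
  verts := U ∪ {w | ∃ u ∈ U, G.Adj u w}
  Adj u w := G.Adj u w ∧ (u ∈ U ∨ w ∈ U)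
  adj_sub h := h.1
  edge_vert h := h.2.elim (fun h' => Or.inl h') (fun h' => Or.inr ⟨_, h', h.1.symm⟩)
  symm := ⟨fun u w h => ⟨h.1.symm, h.2.symm⟩⟩


open SimpleGraph Set

variable {G : SimpleGraph V}

lemma coe_isAcyclic (hacyc : G.IsAcyclic) (H : G.Subgraph) : H.coe.IsAcyclic :=
  fun _v _c hc => hacyc _ (hc.map Subgraph.hom_injective)

/-- Counting for finite connected subgraphs of acyclic graphs. -/
lemma tree_count (hacyc : G.IsAcyclic) (H : G.Subgraph)
    (hfin : H.verts.Finite) (hconn : H.Connected) :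
    H.edgeSet.Finite ∧ H.edgeSet.ncard + 1 = H.verts.ncard ∧
    ∑ v ∈ hfin.toFinset, (H.neighborSet v).ncard = 2 * H.edgeSet.ncard := by
  classical
  haveI : Fintype H.verts := hfin.fintype
  haveI : Fintype H.coe.edgeSet := Fintype.ofFinite _
  have htree : H.coe.IsTree := ⟨hconn.coe, coe_isAcyclic hacyc H⟩
  have hedgefin : H.edgeSet.Finite := by
    rw [← Subgraph.image_coe_edgeSet_coe]
    exact (H.coe.edgeSet.toFinite).image _
  have hcard : H.edgeSet.ncard = H.coe.edgeFinset.card := by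
    rw [← Subgraph.image_coe_edgeSet_coe,
      Set.ncard_image_of_injective _ (Sym2.map.injective Subtype.val_injective),
      Set.ncard_eq_toFinset_card', edgeFinset]
  refine ⟨hedgefin, ?_, ?_⟩
  · rw [hcard, htree.card_edgeFinset, Set.ncard_eq_toFinset_card', Set.toFinset_card]
  · have hnfin : ∀ v : V, (H.neighborSet v).Finite :=
      fun v => hfin.subset (H.neighborSet_subset_verts v)
    haveI : ∀ v : V, Fintype (H.neighborSet v) := fun v => (hnfin v).fintype
    have hdeg : ∀ v : H.verts, H.coe.degree v = (H.neighborSet ↑v).ncard := by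
      intro v
      rw [Subgraph.coe_degree, Subgraph.degree, Set.ncard_eq_toFinset_card', Set.toFinset_card]
    calc ∑ v ∈ hfin.toFinset, (H.neighborSet v).ncard
        = ∑ v : H.verts, (H.neighborSet ↑v).ncard := by
          rw [Finset.sum_subtype hfin.toFinset (fun x => hfin.mem_toFinset)
            (fun v => (H.neighborSet v).ncard)]
      _ = ∑ v : H.verts, H.coe.degree v := by simp [hdeg]
      _ = 2 * H.coe.edgeFinset.card := by
          have h2 := H.coe.sum_degrees_eq_twice_card_edges
          convert h2 using 2 <;> congr!
      _ = 2 * H.edgeSet.ncard := by rw [hcard]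

lemma neighbor_nonempty (H : G.Subgraph) (hconn : H.Connected) (hne : H.edgeSet.Nonempty)
    {v : V} (hv : v ∈ H.verts) : (H.neighborSet v).Nonempty := by
  obtain ⟨e, he⟩ := hne
  obtain ⟨a, b, hab⟩ : ∃ a b, H.Adj a b := by
    induction e using Sym2.ind with
    | _ a b => exact ⟨a, b, he⟩
  obtain ⟨w⟩ := hconn ⟨v, hv⟩ ⟨a, H.edge_vert hab⟩
  cases w with
  | nil => exact ⟨b, by simpa using hab⟩
  | cons h _ =>
    exact ⟨_, (Subgraph.coe_adj _ _ _).mp h⟩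

lemma mes_one {E : Set (Sym2 V)} (hE : E.Finite) :
    mes (fun _ => (1 : ℝ)) E = E.ncard := by
  rw [mes, finsum_mem_eq_finite_toFinset_sum _ hE]
  simp [Set.ncard_eq_toFinset_card _ hE]

lemma lower_bound {p : ℕ} (hp : 3 ≤ p) (hacyc : G.IsAcyclic)
    (hreg : ∀ v : V, (G.neighborSet v).ncard = p) (H : G.Subgraph)
    (hfin : H.verts.Finite) (hconn : H.Connected) (hne : H.edgeSet.Nonempty) :
    ((p : ℝ) - 2) / ((p : ℝ) - 1) ≤ degBdry G H / mes (fun _ => (1 : ℝ)) H.edgeSet := by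
  classical
  obtain ⟨hedgefin, hcount, hsum⟩ := tree_count hacyc H hfin hconn
  have hm1 : 1 ≤ H.edgeSet.ncard := (Set.ncard_pos hedgefin).mpr hne
  have hGnf : ∀ v, (G.neighborSet v).Finite := fun v =>
    Set.finite_of_ncard_ne_zero (by rw [hreg v]; omega)
  have hnb_le : ∀ v, (H.neighborSet v).ncard ≤ p := fun v =>
    hreg v ▸ Set.ncard_le_ncard (H.neighborSet_subset v) (hGnf v)
  have hBfin : (bdry G H).Finite := hfin.subset (fun v hv => hv.1)
  have hsub : hBfin.toFinset ⊆ hfin.toFinset := by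
    intro v hv
    simp only [Set.Finite.mem_toFinset] at hv ⊢
    exact hv.1
  -- interior vertices have degree exactly p
  have hint : ∀ v ∈ hfin.toFinset \ hBfin.toFinset, (H.neighborSet v).ncard = p := by
    intro v hv
    rw [Finset.mem_sdiff, Set.Finite.mem_toFinset, Set.Finite.mem_toFinset] at hv
    obtain ⟨hv1, hv2⟩ := hv
    have : ¬ (H.neighborSet v).ncard < (G.neighborSet v).ncard := fun h => hv2 ⟨hv1, h⟩
    rw [hreg v] at this
    exact le_antisymm (hnb_le v) (not_lt.mp this)
  set DB : ℕ := ∑ v ∈ hBfin.toFinset, (H.neighborSet v).ncard with hDB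
  set m : ℕ := H.edgeSet.ncard
  set icard : ℕ := (hfin.toFinset \ hBfin.toFinset).card
  have hsplit : p * icard + DB = 2 * m := by
    have := Finset.sum_sdiff (f := fun v => (H.neighborSet v).ncard) hsub
    rw [Finset.sum_congr rfl hint, Finset.sum_const, smul_eq_mul] at this
    rw [← hsum, ← this, mul_comm]
  have hb_card : icard + hBfin.toFinset.card = m + 1 := by
    rw [Finset.card_sdiff_add_card_eq_card hsub, ← Set.ncard_eq_toFinset_card _ hfin, ← hcount]
  have hDB_ge : hBfin.toFinset.card ≤ DB := by
    rw [hDB]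
    refine Finset.card_nsmul_le_sum _ _ 1 (fun v hv => ?_) |>.trans_eq' (by simp)
    rw [Set.Finite.mem_toFinset] at hv
    have hnonempty := neighbor_nonempty H hconn hne hv.1
    have : (H.neighborSet v).Finite := hfin.subset (H.neighborSet_subset_verts v)
    exact (Set.ncard_pos this).mpr hnonempty
  -- put everything into ℝ
  have hmes : mes (fun _ => (1 : ℝ)) H.edgeSet = (m : ℝ) := mes_one hedgefin
  have hdb : degBdry G H = (DB : ℝ) := by
    rw [degBdry, finsum_mem_eq_finite_toFinset_sum _ hBfin, hDB, Nat.cast_sum]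
  rw [hmes, hdb]
  have hmpos : (0 : ℝ) < (m : ℝ) := by exact_mod_cast hm1
  have e5 : (3 : ℝ) ≤ (p : ℝ) := by exact_mod_cast hp
  have hq : (0 : ℝ) < (p : ℝ) - 1 := by linarith
  rw [div_le_div_iff₀ hq hmpos]
  have e1 : (p : ℝ) * icard + DB = 2 * m := by exact_mod_cast hsplit
  have e2 : (icard : ℝ) + hBfin.toFinset.card = m + 1 := by exact_mod_cast hb_card
  have e3 : (hBfin.toFinset.card : ℝ) ≤ DB := by exact_mod_cast hDB_ge
  have e4 : (1 : ℝ) ≤ m := by exact_mod_cast hm1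
  have key : ((p : ℝ) - 1) * icard + 1 ≤ m := by linarith
  have hp0 : (0 : ℝ) ≤ p := by linarith
  nlinarith [mul_le_mul_of_nonneg_left key hp0]

lemma walk_mem_closed {s : Set V} (hcl : ∀ u ∈ s, ∀ w, G.Adj u w → w ∈ s)
    {a b : V} (w : G.Walk a b) (ha : a ∈ s) : b ∈ s := by
  induction w with
  | nil => exact ha
  | cons h _ ih => exact ih (hcl _ ha _ h)

lemma exists_boundary_edge [Infinite V] (hconn : G.Connected) {s : Set V}
    (hsfin : s.Finite) (hsne : s.Nonempty) : ∃ u ∈ s, ∃ w, w ∉ s ∧ G.Adj u w := by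
  by_contra hcon
  push_neg at hcon
  have hcl : ∀ u ∈ s, ∀ w, G.Adj u w → w ∈ s := by
    intro u hu w hadj
    by_contra hw
    exact (hcon u hu w hw) hadj
  obtain ⟨u0, hu0⟩ := hsne
  have : ∀ v : V, v ∈ s := fun v => walk_mem_closed hcl ((hconn u0 v).some) hu0
  exact Set.infinite_univ (hsfin.subset fun v _ => this v)

lemma exists_conn [Infinite V] (hconn : G.Connected) (k : ℕ) :
    ∃ K : G.Subgraph, K.Connected ∧ K.verts.Finite ∧ K.verts.ncard = k + 1 := by
  induction k with
  | zero =>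
    obtain ⟨v⟩ := (inferInstance : Nonempty V)
    exact ⟨G.singletonSubgraph v, Subgraph.singletonSubgraph_connected,
      Set.finite_singleton v, by simp [SimpleGraph.singletonSubgraph]⟩
  | succ k ih =>
    obtain ⟨K, hKc, hKf, hKn⟩ := ih
    obtain ⟨u, hu, w, hw, hadj⟩ := exists_boundary_edge hconn hKf hKc.nonempty
    refine ⟨K ⊔ G.subgraphOfAdj hadj, Subgraph.connected_sup hKc.preconnected (Subgraph.subgraphOfAdj_connected hadj).preconnected
      ⟨u, hu, by simp⟩, ?_, ?_⟩
    · exact (hKf.union ((Set.finite_singleton _).insert _))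
    · have hverts : (K ⊔ G.subgraphOfAdj hadj).verts = insert w K.verts := by
        ext x
        simp only [Subgraph.verts_sup, subgraphOfAdj_verts, Set.mem_union, Set.mem_insert_iff,
          Set.mem_singleton_iff]
        constructor
        · rintro (h | rfl | rfl)
          · exact Or.inr h
          · exact Or.inr hu
          · exact Or.inl rfl
        · rintro (rfl | h)
          · exact Or.inr (Or.inr rfl)
          · exact Or.inl h
      rw [hverts, Set.ncard_insert_of_notMem hw hKf, hKn]

section Star

variable {K : G.Subgraph}

lemma star_le (K : G.Subgraph) : K ≤ starSubgraph G K.verts := by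
  constructor
  · intro v hv; exact Or.inl hv
  · intro a b hab
    exact ⟨K.adj_sub hab, Or.inl (K.edge_vert hab)⟩

lemma star_verts_finite (hGnf : ∀ v : V, (G.neighborSet v).Finite) (hKf : K.verts.Finite) :
    (starSubgraph G K.verts).verts.Finite := by
  refine Set.Finite.union hKf (Set.Finite.subset (Set.Finite.biUnion hKf
    (fun u _ => hGnf u)) ?_)
  rintro w ⟨u, hu, hadj⟩
  exact Set.mem_biUnion hu hadj

lemma star_connected (hKc : K.Connected) : (starSubgraph G K.verts).Connected := by
  set H := starSubgraph G K.verts with hH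
  rw [Subgraph.connected_iff', connected_iff_exists_forall_reachable]
  obtain ⟨u0, hu0⟩ := hKc.nonempty
  have hu0H : u0 ∈ H.verts := Or.inl hu0
  refine ⟨⟨u0, hu0H⟩, ?_⟩
  have hreachU : ∀ (u : V) (hu : u ∈ K.verts),
      H.coe.Reachable ⟨u0, hu0H⟩ ⟨u, Or.inl hu⟩ := by
    intro u hu
    have := (hKc.coe ⟨u0, hu0⟩ ⟨u, hu⟩).map (Subgraph.inclusion (star_le K))
    exact this
  rintro ⟨x, hx⟩
  rcases hx with hx | hx
  · exact hreachU x hx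
  · obtain ⟨u, hu, hadj⟩ := hx
    have hHadj : H.Adj u x := ⟨hadj, Or.inl hu⟩
    exact (hreachU u hu).trans hHadj.coe.reachable

lemma star_neighbor_mem (u : V) (hu : u ∈ K.verts) :
    (starSubgraph G K.verts).neighborSet u = G.neighborSet u := by
  ext x
  simp only [Subgraph.mem_neighborSet, starSubgraph, mem_neighborSet]
  exact ⟨fun h => h.1, fun h => ⟨h, Or.inl hu⟩⟩

lemma star_neighbor_not_mem (hacyc : G.IsAcyclic) (hKc : K.Connected) {w : V}
    (hw : w ∈ (starSubgraph G K.verts).verts) (hwU : w ∉ K.verts) :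
    ∃ u, (starSubgraph G K.verts).neighborSet w = {u} := by
  classical
  obtain hw' | ⟨u, hu, hadj⟩ := hw
  · exact absurd hw' hwU
  refine ⟨u, ?_⟩
  ext x
  simp only [Subgraph.mem_neighborSet, starSubgraph, Set.mem_singleton_iff]
  constructor
  · rintro ⟨hadjx, hx | hx⟩
    · exact absurd hx hwU
    -- uniqueness via acyclicity
    by_contra hne
    -- x ≠ u, both in K.verts, both adjacent to w ∉ K.verts
    obtain ⟨q0⟩ := hKc.coe ⟨u, hu⟩ ⟨x, hx⟩
    set q : G.Walk u x := q0.map K.hom with hq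
    have hsupp : ∀ y ∈ q.support, y ∈ K.verts := by
      intro y hy
      replace hy : y ∈ (q0.map K.hom).support := hy
      rw [Walk.support_map, List.mem_map] at hy
      obtain ⟨z, _, rfl⟩ := hy
      exact z.2
    have hpa := q.toPath
    have hwpa : w ∉ (q.toPath : G.Walk u x).support := by
      intro hmem
      exact hwU (hsupp w (q.support_toPath_subset hmem))
    -- second path: u - w - x
    have hpb : (Walk.cons hadj (Walk.cons hadjx Walk.nil) : G.Walk u x).IsPath := by
      have h1 : u ≠ w := fun h => hwU (h ▸ hu)
      have h2 : u ≠ x := fun h => hne h.symm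
      have h3 : w ≠ x := fun h => hwU (by rw [h]; exact hx)
      simp [Walk.isPath_def, h1, h2, h3]
    have := hacyc.path_unique q.toPath ⟨_, hpb⟩
    apply hwpa
    rw [this]
    simp [Walk.support_cons]
  · rintro rfl
    exact ⟨hadj.symm, Or.inr hu⟩

lemma star_edge_nonempty (hu0 : K.verts.Nonempty)
    (hGdeg : ∀ v : V, (G.neighborSet v).Nonempty) :
    (starSubgraph G K.verts).edgeSet.Nonempty := by
  obtain ⟨u, hu⟩ := hu0
  obtain ⟨x, hx⟩ := hGdeg u
  exact ⟨s(u, x), by rw [Subgraph.mem_edgeSet]; exact ⟨hx, Or.inl hu⟩⟩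

end Star

lemma star_ratio {p : ℕ} (hp : 3 ≤ p) (hacyc : G.IsAcyclic)
    (hreg : ∀ v : V, (G.neighborSet v).ncard = p) {K : G.Subgraph}
    (hKc : K.Connected) (hKf : K.verts.Finite) :
    ∃ b m : ℕ,
      (starSubgraph G K.verts).verts.Finite ∧ (starSubgraph G K.verts).Connected ∧
      (starSubgraph G K.verts).edgeSet.Nonempty ∧
      degBdry G (starSubgraph G K.verts) = (b : ℝ) ∧
      mes (fun _ => (1 : ℝ)) (starSubgraph G K.verts).edgeSet = (m : ℝ) ∧
      2 * m = p * K.verts.ncard + b ∧ m + 1 = b + K.verts.ncard ∧ 1 ≤ m := by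
  classical
  set U := K.verts with hU
  set H := starSubgraph G U with hHdef
  have hGnf : ∀ v, (G.neighborSet v).Finite := fun v =>
    Set.finite_of_ncard_ne_zero (by rw [hreg v]; omega)
  have hGdeg : ∀ v : V, (G.neighborSet v).Nonempty := fun v =>
    Set.nonempty_of_ncard_ne_zero (by rw [hreg v]; omega)
  have hfinH : H.verts.Finite := star_verts_finite hGnf hKf
  have hconnH : H.Connected := star_connected hKc
  have hne : H.edgeSet.Nonempty := star_edge_nonempty hKc.nonempty hGdeg
  obtain ⟨hedgefin, hcount, hsum⟩ := tree_count hacyc H hfinH hconnH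
  set m := H.edgeSet.ncard with hm
  have hUsub : U ⊆ H.verts := fun _ h => Or.inl h
  have hdfin : (H.verts \ U).Finite := hfinH.sdiff (t := U)
  -- degrees
  have hdegU : ∀ u ∈ U, (H.neighborSet u).ncard = p := by
    intro u hu
    rw [hHdef, star_neighbor_mem u hu, hreg]
  have hdegW : ∀ w ∈ H.verts \ U, (H.neighborSet w).ncard = 1 := by
    rintro w ⟨hw, hwU⟩
    obtain ⟨u, husing⟩ := star_neighbor_not_mem hacyc hKc hw hwU
    rw [husing, Set.ncard_singleton]
  set b := (H.verts \ U).ncard with hb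
  set k := U.ncard with hk
  have hcard_split : b + k = H.verts.ncard :=
    Set.ncard_diff_add_ncard_of_subset hUsub hfinH
  -- handshake split
  have hsubF : hKf.toFinset ⊆ hfinH.toFinset := by
    intro v hv
    rw [Set.Finite.mem_toFinset] at hv ⊢
    exact hUsub hv
  have hdiffF : hdfin.toFinset = hfinH.toFinset \ hKf.toFinset :=
    Set.Finite.toFinset_sdiff _ _ _
  have hsplit := Finset.sum_sdiff (f := fun v => (H.neighborSet v).ncard) hsubF
  have hsumU : ∑ v ∈ hKf.toFinset, (H.neighborSet v).ncard = p * k := by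
    rw [Finset.sum_congr rfl (fun v hv => hdegU v (hKf.mem_toFinset.mp hv)),
      Finset.sum_const, smul_eq_mul, mul_comm, ← Set.ncard_eq_toFinset_card _ hKf]
  have hsumW : ∑ v ∈ hfinH.toFinset \ hKf.toFinset, (H.neighborSet v).ncard = b := by
    rw [← hdiffF, Finset.sum_congr rfl (fun v hv => hdegW v (hdfin.mem_toFinset.mp hv)),
      Finset.sum_const, smul_eq_mul, mul_one, ← Set.ncard_eq_toFinset_card _ hdfin]
  have hhand : 2 * m = p * k + b := by
    rw [← hsum, ← hsplit, hsumU, hsumW, Nat.add_comm]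
  -- boundary identification
  have hbdry : bdry G H = H.verts \ U := by
    ext v
    simp only [bdry, Set.mem_setOf_eq, Set.mem_sep_iff, Set.mem_diff]
    constructor
    · rintro ⟨hv, hlt⟩
      refine ⟨hv, fun hvU => ?_⟩
      rw [hdegU v hvU, hreg v] at hlt
      exact lt_irrefl _ hlt
    · rintro ⟨hv, hvU⟩
      refine ⟨hv, ?_⟩
      rw [hdegW v ⟨hv, hvU⟩, hreg v]
      omega
  have hdegB : degBdry G H = (b : ℝ) := by
    rw [degBdry, hbdry, finsum_mem_eq_finite_toFinset_sum _ hdfin]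
    rw [Finset.sum_congr rfl (fun v hv => by
      rw [hdegW v (hdfin.mem_toFinset.mp hv), Nat.cast_one]),
      Finset.sum_const, nsmul_eq_mul, mul_one, ← Set.ncard_eq_toFinset_card _ hdfin]
  have hm1 : 1 ≤ m := (Set.ncard_pos hedgefin).mpr hne
  exact ⟨b, m, hfinH, hconnH, hne, hdegB, mes_one hedgefin, hhand,
    by rw [hcount, hcard_split], hm1⟩

/-- for the equilateral `p`-regular infinite metric tree (`p ≥ 3`),
`α(G) = (p−2)/(p−1)`. -/
theorem statement_16 {V : Type*} [Infinite V] (p : ℕ) (hp : 3 ≤ p)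
    (G : SimpleGraph V) (hconn : G.Connected) (hacyc : G.IsAcyclic)
    (hreg : ∀ v : V, (G.neighborSet v).ncard = p) :
    alpha G (fun _ => (1 : ℝ)) = ((p : ℝ) - 2) / ((p : ℝ) - 1) := by
  classical
  set c : ℝ := ((p : ℝ) - 2) / ((p : ℝ) - 1) with hc
  set S : Set ℝ := {x | ∃ H : G.Subgraph, H.verts.Finite ∧ H.Connected ∧ H.edgeSet.Nonempty ∧
    x = degBdry G H / mes (fun _ => (1 : ℝ)) H.edgeSet} with hS
  have halpha : alpha G (fun _ => (1 : ℝ)) = sInf S := rfl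
  have hlb : ∀ x ∈ S, c ≤ x := by
    rintro x ⟨H, hfin, hcon, hne, rfl⟩
    exact lower_bound hp hacyc hreg H hfin hcon hne
  have hmem : ∀ k : ℕ, ∃ b m : ℕ, ((b : ℝ) / (m : ℝ)) ∈ S ∧
      2 * m = p * (k + 1) + b ∧ m + 1 = b + (k + 1) ∧ 1 ≤ m := by
    intro k
    obtain ⟨K, hKc, hKf, hKn⟩ := exists_conn hconn k
    obtain ⟨b, m, hfinH, hconnH, hneH, hdegB, hmes, h1, h2, h3⟩ :=
      star_ratio hp hacyc hreg hKc hKf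
    rw [hKn] at h1 h2
    exact ⟨b, m, ⟨starSubgraph G K.verts, hfinH, hconnH, hneH, by rw [hdegB, hmes]⟩, h1, h2, h3⟩
  have hSne : S.Nonempty := by
    obtain ⟨b, m, hbm, _⟩ := hmem 0
    exact ⟨_, hbm⟩
  have hbdd : BddBelow S := ⟨c, hlb⟩
  have hP3 : (3 : ℝ) ≤ (p : ℝ) := by exact_mod_cast hp
  rw [halpha]
  refine le_antisymm ?_ (le_csInf hSne hlb)
  rw [Real.sInf_le_iff hbdd hSne]
  intro ε hε
  obtain ⟨k, hk⟩ := exists_nat_gt ((p : ℝ) / ε)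
  obtain ⟨b, m, hbm, h1, h2, h3⟩ := hmem k
  refine ⟨_, hbm, ?_⟩
  have e1 : (p : ℝ) * ((k : ℝ) + 1) + (b : ℝ) = 2 * (m : ℝ) := by exact_mod_cast h1.symm
  have e2 : (b : ℝ) + ((k : ℝ) + 1) = (m : ℝ) + 1 := by exact_mod_cast h2.symm
  have hM1 : (1 : ℝ) ≤ m := by exact_mod_cast h3
  have hMpos : (0 : ℝ) < m := by linarith
  have hq : (0 : ℝ) < (p : ℝ) - 1 := by linarith
  have hκ : (p : ℝ) / ε < (k : ℝ) + 1 := by linarith [hk]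
  have hεκ : (p : ℝ) < ε * ((k : ℝ) + 1) := by
    rw [div_lt_iff₀ hε] at hκ
    linarith [hκ]
  have hid : (b : ℝ) * ((p : ℝ) - 1) = ((p : ℝ) - 2) * m + (p : ℝ) := by
    linear_combination (-1) * e1 + (p : ℝ) * e2
  have hMκ : (m : ℝ) = ((p : ℝ) - 1) * ((k : ℝ) + 1) + 1 := by linear_combination e2 - e1
  have hrw : c + ε = (((p : ℝ) - 2) + ε * ((p : ℝ) - 1)) / ((p : ℝ) - 1) := by
    rw [hc]
    field_simp
  rw [hrw, div_lt_div_iff₀ hMpos hq]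
  have hκpos : (0 : ℝ) < (k : ℝ) + 1 := by positivity
  nlinarith [hid, hMκ, hεκ, mul_pos hε hκpos, sq_nonneg ((p : ℝ) - 3),
    mul_le_mul_of_nonneg_left (show (4:ℝ) ≤ ((p:ℝ)-1)^2 by nlinarith)
      (le_of_lt (mul_pos hε hκpos)),
    mul_lt_mul_of_pos_right hεκ (show (0:ℝ) < ((p:ℝ)-1)^2 by positivity)]
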